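/- In the n-dimensional anticommutative n-ary algebra with basis x_1,...,x_n and multiplication determined by [x_1,...,x_n] = x_2 (extended anticommutatively, with products of basis elements with repetitions equal to zero), when n is even the linear map D defined by D(x_1) = x_1, D(x_2) = x_2, D(x_3) = −(1/2)x_3, D(x_4) = −(1/2)x_4, and D(x_j) = (−1)^j x_j for j > 4 is an invertible derivation of the n-ary algebra. -/

import Mathlib

/-- Left-normed product `((...(x₁x₂)...)x_{n-1})x_n` (junk value `0` for `n = 0`). -/
def lnProd {A : Type*} [Mul A] [Zero A] : ∀ {n : ℕ}, (Fin n → A) → A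
  | 0, _ => 0
  | _ + 1, x => (List.ofFn fun i => x i.succ).foldl (· * ·) (x 0)

/-- `d` is a left Leibniz-derivation of order `n`. -/
def IsLeftLeibnizDer (F : Type*) {A : Type*} [Field F] [NonUnitalNonAssocRing A]
    [Module F A] (n : ℕ) (d : A →ₗ[F] A) : Prop :=
  ∀ x : Fin n → A, d (lnProd x) = ∑ i, lnProd (Function.update x i (d (x i)))

/-- Arrangements of brackets on a product of `n` factors. -/
inductive BTree : ℕ → Type
  | leaf : BTree 1
  | node : ∀ {m k : ℕ}, BTree m → BTree k → BTree (m + k)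

/-- The product of `x 0, ..., x (n-1)` with the arrangement of brackets `t`. -/
def BTree.eval {A : Type*} [Mul A] : ∀ {n : ℕ}, BTree n → (Fin n → A) → A
  | _, .leaf, x => x 0
  | _, .node (m := m) (k := k) t u, x =>
      (BTree.eval t fun i => x (Fin.castAdd k i)) * (BTree.eval u fun j => x (Fin.natAdd m j))

/-- `d` is an `f`-Leibniz-derivation for the arrangement of brackets `t`. -/
def IsLeibnizDerWrt (F : Type*) {A : Type*} [Field F] [NonUnitalNonAssocRing A]
    [Module F A] {n : ℕ} (t : BTree n) (d : A →ₗ[F] A) : Prop :=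
  ∀ x : Fin n → A, d (t.eval x) = ∑ i, t.eval (Function.update x i (d (x i)))

/-- The product of two submodules of a (nonassociative, nonunital) algebra:
the span of all products `s * t`, `s ∈ S`, `t ∈ T`. -/
def subMul (F : Type*) {A : Type*} [Field F] [NonUnitalNonAssocRing A] [Module F A]
    (S T : Submodule F A) : Submodule F A :=
  Submodule.span F {z | ∃ s ∈ S, ∃ t ∈ T, z = s * t}

/-- `algPow F S k` is the power `S^(k+1)`, where `S^1 = S` and
`S^n = Σ_{i=1}^{n-1} S^i S^(n-i)`. -/
def algPow (F : Type*) {A : Type*} [Field F] [NonUnitalNonAssocRing A] [Module F A]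
    (S : Submodule F A) : ℕ → Submodule F A
  | 0 => S
  | n + 1 => ⨆ i : Fin (n + 1), subMul F (algPow F S i) (algPow F S (n - (i : ℕ)))
  termination_by k => k
  decreasing_by all_goals omega

/-- `rpow F S k` is the right power `S^<k+1>`: `S^<1> = S`, `S^<n> = S^<n-1> S`. -/
def rpow (F : Type*) {A : Type*} [Field F] [NonUnitalNonAssocRing A] [Module F A]
    (S : Submodule F A) : ℕ → Submodule F A
  | 0 => S
  | n + 1 => subMul F (rpow F S n) S

/-- the corrected Williams example. In the `n`-dimensional alternating
`n`-ary algebra with `[x₁,...,xₙ] = x₂` (`n` even), the map `D` with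
`D x₁ = x₁, D x₂ = x₂, D x₃ = -½x₃, D x₄ = -½x₄, D x_j = (-1)^j x_j (j > 4)`
is an invertible derivation of the `n`-ary algebra. -/


private def lamF (F : Type*) [Field F] (j : ℕ) : F :=
  if j < 2 then 1 else if j < 4 then -(1/2) else (-1)^(j+1)

private lemma lamF_ne_zero (F : Type*) [Field F] [CharZero F] (j : ℕ) : lamF F j ≠ 0 := by
  unfold lamF; split_ifs
  · norm_num
  · norm_num
  · exact pow_ne_zero _ (by norm_num)

private lemma lamF_sum (F : Type*) [Field F] [CharZero F] {n : ℕ} (hn4 : 4 ≤ n) (hne : Even n) :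
    ∑ j ∈ Finset.range n, lamF F j = 1 := by
  have h1 : ∀ N : ℕ, Even N → ∑ j ∈ Finset.range N, ((-1 : F))^(j+1) = 0 := by
    intro N hN
    have hg := neg_one_geom_sum (R := F) (n := N)
    rw [if_pos hN] at hg
    simp only [pow_succ]
    rw [← Finset.sum_mul, hg, zero_mul]
  have hsplit : ∑ j ∈ Finset.range n, lamF F j
      = ∑ j ∈ Finset.range 4, lamF F j + ∑ j ∈ Finset.Ico 4 n, lamF F j := by
    rw [Finset.range_eq_Ico, ← Finset.sum_Ico_consecutive _ (by omega : 0 ≤ 4) hn4,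
      ← Finset.range_eq_Ico]
  have hIco : ∑ j ∈ Finset.Ico 4 n, lamF F j = ∑ j ∈ Finset.Ico 4 n, ((-1:F))^(j+1) := by
    refine Finset.sum_congr rfl fun j hj => ?_
    have : 4 ≤ j := (Finset.mem_Ico.mp hj).1
    unfold lamF
    rw [if_neg (by omega), if_neg (by omega)]
  rw [hsplit, hIco, Finset.sum_Ico_eq_sub _ hn4, h1 n hne]
  simp [Finset.sum_range_succ, lamF]
  norm_num

theorem stmt17 {F V : Type*} [Field F] [CharZero F] [AddCommGroup V] [Module F V]
    {n : ℕ} (hn4 : 4 ≤ n) (hne : Even n) (B : Module.Basis (Fin n) F V)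
    (m : MultilinearMap F (fun _ : Fin n => V) V)
    (halt : ∀ (x : Fin n → V) (i j : Fin n), i ≠ j → x i = x j → m x = 0)
    (hB : m (fun i => B i) = B ⟨1, by omega⟩)
    (D : V →ₗ[F] V)
    (hD0 : D (B ⟨0, by omega⟩) = B ⟨0, by omega⟩)
    (hD1 : D (B ⟨1, by omega⟩) = B ⟨1, by omega⟩)
    (hD2 : D (B ⟨2, by omega⟩) = (-(1 / 2) : F) • B ⟨2, by omega⟩)
    (hD3 : D (B ⟨3, by omega⟩) = (-(1 / 2) : F) • B ⟨3, by omega⟩)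
    (hDj : ∀ i : Fin n, 4 ≤ (i : ℕ) →
      D (B i) = ((-1 : F) ^ ((i : ℕ) + 1)) • B i) :
    Function.Bijective D ∧
      ∀ y : Fin n → V, D (m y) = ∑ i, m (Function.update y i (D (y i))) := by
  -- D is diagonal with eigenvalues `lamF F i`
  have hD : ∀ i : Fin n, D (B i) = lamF F (i : ℕ) • B i := by
    intro i
    by_cases h0 : (i : ℕ) = 0
    · have hi : i = ⟨0, by omega⟩ := Fin.ext h0
      rw [hi, hD0]; norm_num [lamF]
    by_cases h1 : (i : ℕ) = 1
    · have hi : i = ⟨1, by omega⟩ := Fin.ext h1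
      rw [hi, hD1]; norm_num [lamF]
    by_cases h2 : (i : ℕ) = 2
    · have hi : i = ⟨2, by omega⟩ := Fin.ext h2
      rw [hi, hD2]; norm_num [lamF]
    by_cases h3 : (i : ℕ) = 3
    · have hi : i = ⟨3, by omega⟩ := Fin.ext h3
      rw [hi, hD3]; norm_num [lamF]
    · have h4 : 4 ≤ (i : ℕ) := by omega
      rw [hDj i h4]
      unfold lamF
      rw [if_neg (by omega), if_neg (by omega)]
  -- the alternating map
  let f : V [⋀^Fin n]→ₗ[F] V :=
    { toMultilinearMap := m
      map_eq_zero_of_eq' := fun v i j h hij => halt v i j hij h }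
  have hf : ∀ x, f x = m x := fun _ => rfl
  -- rewriting the derivation condition's right-hand side
  have hupd : ∀ (y : Fin n → V) (i : Fin n),
      (fun j => (Function.update (fun _ : Fin n => (LinearMap.id : V →ₗ[F] V)) i D) j (y j))
        = Function.update y i (D (y i)) := by
    intro y i; funext j
    rcases eq_or_ne j i with rfl | hj
    · simp
    · simp [Function.update_of_ne hj]
  -- key multilinear identity
  have key : D.compMultilinearMap m
      = ∑ i : Fin n, m.compLinearMap
          (Function.update (fun _ : Fin n => (LinearMap.id : V →ₗ[F] V)) i D) := by
    refine Module.Basis.ext_multilinear (fun _ => B) fun v => ?_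
    have hRHS : (∑ i : Fin n, m.compLinearMap
          (Function.update (fun _ : Fin n => (LinearMap.id : V →ₗ[F] V)) i D))
          (fun j => B (v j))
        = ∑ i : Fin n, m (Function.update (fun j => B (v j)) i (D (B (v i)))) := by
      rw [MultilinearMap.sum_apply]
      refine Finset.sum_congr rfl fun i _ => ?_
      rw [MultilinearMap.compLinearMap_apply, hupd (fun j => B (v j)) i]
    rw [LinearMap.compMultilinearMap_apply, hRHS]
    by_cases hv : Function.Injective v
    · -- v is a permutation
      have hb : Function.Bijective v := Finite.injective_iff_bijective.mp hv
      set σ : Equiv.Perm (Fin n) := Equiv.ofBijective v hb with hσ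
      have hmv : m (fun i => B (v i)) = Equiv.Perm.sign σ • B ⟨1, by omega⟩ := by
        calc m (fun i => B (v i)) = f ((fun i => B i) ∘ σ) := rfl
          _ = Equiv.Perm.sign σ • f (fun i => B i) := f.map_perm _ σ
          _ = Equiv.Perm.sign σ • B ⟨1, by omega⟩ := by rw [hf, hB]
      have hterm : ∀ i : Fin n,
          m (Function.update (fun j => B (v j)) i (D (B (v i))))
            = lamF F ((v i : ℕ)) • (Equiv.Perm.sign σ • B ⟨1, by omega⟩) := by
        intro i
        rw [hD (v i), m.map_update_smul, Function.update_eq_self, hmv]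
      have sumlam : ∑ i : Fin n, lamF F ((v i : ℕ)) = 1 := by
        have h := Equiv.sum_comp σ (fun j : Fin n => lamF F (j : ℕ))
        have h2 : ∑ i : Fin n, lamF F ((v i : ℕ)) = ∑ j : Fin n, lamF F (j : ℕ) := h
        rw [h2, Fin.sum_univ_eq_sum_range]
        exact lamF_sum F hn4 hne
      calc D (m fun i => B (v i))
          = Equiv.Perm.sign σ • D (B ⟨1, by omega⟩) := by
            rw [hmv, Units.smul_def, Units.smul_def, map_zsmul]
        _ = Equiv.Perm.sign σ • B ⟨1, by omega⟩ := by rw [hD1]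
        _ = (1 : F) • Equiv.Perm.sign σ • B ⟨1, by omega⟩ := by rw [one_smul]
        _ = (∑ i : Fin n, lamF F ((v i : ℕ))) • Equiv.Perm.sign σ • B ⟨1, by omega⟩ := by
            rw [sumlam]
        _ = ∑ i : Fin n, lamF F ((v i : ℕ)) • Equiv.Perm.sign σ • B ⟨1, by omega⟩ := by
            rw [Finset.sum_smul]
        _ = ∑ i : Fin n, m (Function.update (fun j => B (v j)) i (D (B (v i)))) := by
            exact (Finset.sum_congr rfl fun i _ => (hterm i).symm)
    · -- v has a repetition
      rw [Function.Injective] at hv; push_neg at hv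
      obtain ⟨i, j, hvij, hij⟩ := hv
      have h0 : m (fun k => B (v k)) = 0 :=
        halt _ i j hij (by simp only [hvij])
      have hterm : ∀ k : Fin n,
          m (Function.update (fun j => B (v j)) k (D (B (v k)))) = 0 := by
        intro k
        rw [hD (v k), m.map_update_smul, Function.update_eq_self, h0, smul_zero]
      rw [h0, map_zero]
      exact (Finset.sum_congr rfl fun k _ => hterm k).trans Finset.sum_const_zero |>.symm
  -- derivation property
  have der : ∀ y : Fin n → V, D (m y) = ∑ i, m (Function.update y i (D (y i))) := by
    intro y
    have h := DFunLike.congr_fun key y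
    rw [LinearMap.compMultilinearMap_apply, MultilinearMap.sum_apply] at h
    rw [h]
    refine Finset.sum_congr rfl fun i _ => ?_
    rw [MultilinearMap.compLinearMap_apply, hupd y i]
  -- invertibility
  let E : V →ₗ[F] V := B.constr F fun i => (lamF F (i : ℕ))⁻¹ • B i
  have hED : ∀ i, E (D (B i)) = B i := by
    intro i
    rw [hD i, map_smul, Module.Basis.constr_basis, smul_smul,
      mul_inv_cancel₀ (lamF_ne_zero F _), one_smul]
  have hDE : ∀ i, D (E (B i)) = B i := by
    intro i
    show D (E (B i)) = B i
    rw [Module.Basis.constr_basis, map_smul, hD i, smul_smul,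
      inv_mul_cancel₀ (lamF_ne_zero F _), one_smul]
  have h1 : E.comp D = LinearMap.id := B.ext fun i => by simp [hED i]
  have h2 : D.comp E = LinearMap.id := B.ext fun i => by simp [hDE i]
  have hl : Function.LeftInverse E D := fun x => by
    simpa using DFunLike.congr_fun h1 x
  have hr : Function.RightInverse E D := fun x => by
    simpa using DFunLike.congr_fun h2 x
  exact ⟨⟨hl.injective, hr.surjective⟩, der⟩
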